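/- Let (Ω, P) be a probability space, S a measurable space, and z₁, …, z_m : Ω → S independent identically distributed random variables with m ≥ 2. Let K : S × S → ℝ be a bounded measurable symmetric kernel with K(x,x) = 0 for all x. Define T := m^{−2} Σ_{i≠j} K(z_i, z_j) and ζ₁ := Var(E[K(z₁, z₂) | z₁]) (the variance of the conditional expectation x ↦ E[K(x, z₂)] evaluated at z₁). Then Var(T) = (2(m−1)·Var(K(z₁,z₂)) + 4(m−1)(m−2)·ζ₁) / m³. -/

import Mathlib

open MeasureTheory ProbabilityTheory

private lemma integrable_of_bdd {α : Type*} [MeasurableSpace α] {μ : Measure α}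
    [IsFiniteMeasure μ] {f : α → ℝ} {C : ℝ} (hf : AEStronglyMeasurable f μ)
    (h : ∀ x, |f x| ≤ C) : Integrable f μ :=
  ⟨hf, HasFiniteIntegral.of_bounded (C := C)
    (Filter.Eventually.of_forall (fun x => by simpa [Real.norm_eq_abs] using h x))⟩

private lemma sum_two_special {n : ℕ} (a b : Fin n) (hab : a ≠ b) (va vb r : ℝ) :
    ∑ x : Fin n, (if x = a then va else if x = b then vb else r)
      = va + vb + ((n : ℝ) - 2) * r := by
  have h2 : 2 ≤ n := by
    have h := Finset.card_le_card (Finset.subset_univ ({a, b} : Finset (Fin n)))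
    rwa [Finset.card_insert_of_notMem (by simp [hab]), Finset.card_singleton,
      Finset.card_univ, Fintype.card_fin] at h
  set f : Fin n → ℝ := fun x => if x = a then va else if x = b then vb else r with hf
  have hma : a ∈ Finset.univ.erase b := Finset.mem_erase.2 ⟨hab, Finset.mem_univ a⟩
  have hsplit : ∑ x : Fin n, f x
      = f b + (f a + ∑ x ∈ (Finset.univ.erase b).erase a, f x) := by
    rw [Finset.add_sum_erase _ f hma, Finset.add_sum_erase _ f (Finset.mem_univ b)]
  have hca : ((Finset.univ.erase b).erase a).card = n - 2 := by
    rw [Finset.card_erase_of_mem hma, Finset.card_erase_of_mem (Finset.mem_univ b),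
      Finset.card_univ, Fintype.card_fin]
    omega
  have hconst : ∑ x ∈ (Finset.univ.erase b).erase a, f x
      = ∑ _x ∈ (Finset.univ.erase b).erase a, r := by
    refine Finset.sum_congr rfl fun x hx => ?_
    rcases Finset.mem_erase.1 hx with ⟨hxa, hx'⟩
    rcases Finset.mem_erase.1 hx' with ⟨hxb, _⟩
    simp [hf, hxa, hxb]
  have hfa : f a = va := by simp [hf]
  have hfb : f b = vb := by simp [hf, Ne.symm hab]
  rw [hsplit, hconst, Finset.sum_const, hca, nsmul_eq_mul, Nat.cast_sub h2, hfa, hfb]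
  push_cast
  ring

private lemma sum_three_special {n : ℕ} (a b c : Fin n) (hab : a ≠ b) (hac : a ≠ c)
    (hbc : b ≠ c) (va vb vc r : ℝ) :
    ∑ x : Fin n, (if x = a then va else if x = b then vb else if x = c then vc else r)
      = va + vb + vc + ((n : ℝ) - 3) * r := by
  have h3 : 3 ≤ n := by
    have h := Finset.card_le_card (Finset.subset_univ ({a, b, c} : Finset (Fin n)))
    rwa [Finset.card_insert_of_notMem (by simp [hab, hac]),
      Finset.card_insert_of_notMem (by simp [hbc]), Finset.card_singleton,
      Finset.card_univ, Fintype.card_fin] at h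
  set f : Fin n → ℝ := fun x => if x = a then va else if x = b then vb else if x = c then vc else r
    with hf
  have hmb : b ∈ Finset.univ.erase c := Finset.mem_erase.2 ⟨hbc, Finset.mem_univ b⟩
  have hma : a ∈ (Finset.univ.erase c).erase b :=
    Finset.mem_erase.2 ⟨hab, Finset.mem_erase.2 ⟨hac, Finset.mem_univ a⟩⟩
  have hsplit : ∑ x : Fin n, f x
      = f c + (f b + (f a + ∑ x ∈ ((Finset.univ.erase c).erase b).erase a, f x)) := by
    rw [Finset.add_sum_erase _ f hma, Finset.add_sum_erase _ f hmb,
      Finset.add_sum_erase _ f (Finset.mem_univ c)]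
  have hca : (((Finset.univ.erase c).erase b).erase a).card = n - 3 := by
    rw [Finset.card_erase_of_mem hma, Finset.card_erase_of_mem hmb,
      Finset.card_erase_of_mem (Finset.mem_univ c), Finset.card_univ, Fintype.card_fin]
    omega
  have hconst : ∑ x ∈ ((Finset.univ.erase c).erase b).erase a, f x
      = ∑ _x ∈ ((Finset.univ.erase c).erase b).erase a, r := by
    refine Finset.sum_congr rfl fun x hx => ?_
    rcases Finset.mem_erase.1 hx with ⟨hxa, hx'⟩
    rcases Finset.mem_erase.1 hx' with ⟨hxb, hx''⟩
    rcases Finset.mem_erase.1 hx'' with ⟨hxc, _⟩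
    simp [hf, hxa, hxb, hxc]
  have hfa : f a = va := by simp [hf]
  have hfb : f b = vb := by simp [hf, Ne.symm hab]
  have hfc : f c = vc := by simp [hf, Ne.symm hac, Ne.symm hbc]
  rw [hsplit, hconst, Finset.sum_const, hca, nsmul_eq_mul, Nat.cast_sub h3, hfa, hfb, hfc]
  push_cast
  ring

set_option maxHeartbeats 2000000 in
/-- Hoeffding decomposition of the variance of the V-statistic of a symmetric
kernel vanishing on the diagonal, built from i.i.d. samples. -/
theorem vstatistic_variance_formula
    {Ω S : Type*} [MeasureSpace Ω] [IsProbabilityMeasure (ℙ : Measure Ω)]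
    [MeasurableSpace S]
    (m : ℕ) (hm : 2 ≤ m) (z : Fin m → Ω → S)
    (hmeas : ∀ i, Measurable (z i))
    (hindep : iIndepFun z ℙ)
    (hident : ∀ i j, IdentDistrib (z i) (z j) ℙ ℙ)
    (K : S → S → ℝ)
    (hKmeas : Measurable fun p : S × S => K p.1 p.2)
    (hKbdd : ∃ C : ℝ, ∀ x y, |K x y| ≤ C)
    (hKsymm : ∀ x y, K x y = K y x)
    (hKdiag : ∀ x, K x x = 0) :
    variance (fun ω => ((m : ℝ) ^ 2)⁻¹ *
        ∑ i : Fin m, ∑ j : Fin m, if i = j then 0 else K (z i ω) (z j ω)) ℙ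
      = (2 * ((m : ℝ) - 1) *
            variance (fun ω => K (z ⟨0, by omega⟩ ω) (z ⟨1, by omega⟩ ω)) ℙ
          + 4 * ((m : ℝ) - 1) * ((m : ℝ) - 2) *
            variance (fun ω => ∫ ω', K (z ⟨0, by omega⟩ ω) (z ⟨1, by omega⟩ ω') ∂ℙ) ℙ)
        / (m : ℝ) ^ 3 := by
  classical
  obtain ⟨C₀, hC₀⟩ := hKbdd
  set C := |C₀| with hCdef
  have hC : ∀ x y, |K x y| ≤ C := fun x y => (hC₀ x y).trans (le_abs_self _)
  have hC0 : 0 ≤ C := abs_nonneg _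
  let i0 : Fin m := ⟨0, by omega⟩
  let i1 : Fin m := ⟨1, by omega⟩
  have h01 : i0 ≠ i1 := by simp [i0, i1, Fin.ext_iff]
  -- the common law
  set μ := Measure.map (z i0) ℙ with hμdef
  have hμprob : IsProbabilityMeasure μ := Measure.isProbabilityMeasure_map (hmeas i0).aemeasurable
  have hmap : ∀ i, Measure.map (z i) ℙ = μ := fun i => (hident i i0).map_eq
  -- pair and triple pushforwards
  have hpair : ∀ i j : Fin m, i ≠ j →
      Measure.map (fun ω => (z i ω, z j ω)) ℙ = μ.prod μ := by
    intro i j hij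
    rw [← ((indepFun_iff_map_prod_eq_prod_map_map (hmeas i).aemeasurable
      (hmeas j).aemeasurable).mp (hindep.indepFun hij)).symm, hmap i, hmap j]
  have htrip : ∀ i j k : Fin m, i ≠ j → i ≠ k → j ≠ k →
      Measure.map (fun ω => (z i ω, (z j ω, z k ω))) ℙ = μ.prod (μ.prod μ) := by
    intro i j k hij hik hjk
    have h1 : IndepFun (z i) (fun ω => (z j ω, z k ω)) ℙ :=
      (hindep.indepFun_prodMk hmeas j k i hij.symm hik.symm).symm
    rw [(indepFun_iff_map_prod_eq_prod_map_map (hmeas i).aemeasurable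
      ((hmeas j).prodMk (hmeas k)).aemeasurable).mp h1, hmap i, hpair j k hjk]
  -- key real quantities
  set A := ∫ p : S × S, K p.1 p.2 ∂(μ.prod μ) with hA
  set B := ∫ p : S × S, (K p.1 p.2) ^ 2 ∂(μ.prod μ) with hB
  set hfun : S → ℝ := fun x => ∫ y, K x y ∂μ with hhfun
  set Cv := ∫ x, (hfun x) ^ 2 ∂μ with hCv
  have mh : StronglyMeasurable hfun := hKmeas.stronglyMeasurable.integral_prod_right'
  have bh : ∀ x, |hfun x| ≤ C := by
    intro x
    have h := norm_integral_le_of_norm_le_const (μ := μ) (f := fun y => K x y) (C := C)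
      (Filter.Eventually.of_forall fun y => by simpa [Real.norm_eq_abs] using hC x y)
    simpa [Real.norm_eq_abs, measure_univ] using h
  -- measurability and integrability toolbox
  have mKz : ∀ i j : Fin m, Measurable fun ω => K (z i ω) (z j ω) :=
    fun i j => hKmeas.comp ((hmeas i).prodMk (hmeas j))
  have iKz : ∀ i j : Fin m, Integrable (fun ω => K (z i ω) (z j ω)) ℙ :=
    fun i j => integrable_of_bdd (mKz i j).aestronglyMeasurable (fun ω => hC _ _)
  have hKprodInt : Integrable (fun p : S × S => K p.1 p.2) (μ.prod μ) :=
    integrable_of_bdd hKmeas.aestronglyMeasurable (fun p => hC _ _)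
  -- transfer of integrals
  have hIA : ∀ i j : Fin m, i ≠ j → ∫ ω, K (z i ω) (z j ω) ∂ℙ = A := by
    intro i j hij
    calc ∫ ω, K (z i ω) (z j ω) ∂ℙ
        = ∫ p : S × S, K p.1 p.2 ∂(Measure.map (fun ω => (z i ω, z j ω)) ℙ) :=
          (integral_map ((hmeas i).prodMk (hmeas j)).aemeasurable
            hKmeas.aestronglyMeasurable).symm
      _ = A := by rw [hpair i j hij]
  have hIB : ∀ i j : Fin m, i ≠ j → ∫ ω, (K (z i ω) (z j ω)) ^ 2 ∂ℙ = B := by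
    intro i j hij
    calc ∫ ω, (K (z i ω) (z j ω)) ^ 2 ∂ℙ
        = ∫ p : S × S, (K p.1 p.2) ^ 2 ∂(Measure.map (fun ω => (z i ω, z j ω)) ℙ) :=
          (integral_map ((hmeas i).prodMk (hmeas j)).aemeasurable
            (hKmeas.pow_const 2).aestronglyMeasurable).symm
      _ = B := by rw [hpair i j hij]
  have hIC : ∀ i j k : Fin m, i ≠ j → i ≠ k → j ≠ k →
      ∫ ω, K (z i ω) (z j ω) * K (z i ω) (z k ω) ∂ℙ = Cv := by
    intro i j k hij hik hjk
    have hgm : Measurable fun q : S × S × S => K q.1 q.2.1 * K q.1 q.2.2 :=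
      (hKmeas.comp (measurable_fst.prodMk (measurable_fst.comp measurable_snd))).mul
        (hKmeas.comp (measurable_fst.prodMk (measurable_snd.comp measurable_snd)))
    calc ∫ ω, K (z i ω) (z j ω) * K (z i ω) (z k ω) ∂ℙ
        = ∫ q : S × S × S, K q.1 q.2.1 * K q.1 q.2.2
            ∂(Measure.map (fun ω => (z i ω, (z j ω, z k ω))) ℙ) :=
          (integral_map ((hmeas i).prodMk ((hmeas j).prodMk (hmeas k))).aemeasurable
            hgm.aestronglyMeasurable).symm
      _ = ∫ q : S × S × S, K q.1 q.2.1 * K q.1 q.2.2 ∂(μ.prod (μ.prod μ)) := by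
          rw [htrip i j k hij hik hjk]
      _ = ∫ x, ∫ y : S × S, K x y.1 * K x y.2 ∂(μ.prod μ) ∂μ := by
          refine integral_prod _ (integrable_of_bdd hgm.aestronglyMeasurable
            (C := C * C) fun q => ?_)
          rw [abs_mul]
          exact mul_le_mul (hC _ _) (hC _ _) (abs_nonneg _) hC0
      _ = ∫ x, hfun x * hfun x ∂μ := by
          refine integral_congr_ae (Filter.Eventually.of_forall fun x => ?_)
          exact integral_prod_mul (fun s => K x s) (fun s => K x s)
      _ = Cv := by
          rw [hCv]
          refine integral_congr_ae (Filter.Eventually.of_forall fun x => ?_)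
          ring
  have hIA4 : ∀ i j k l : Fin m, i ≠ j → k ≠ l → i ≠ k → i ≠ l → j ≠ k → j ≠ l →
      ∫ ω, K (z i ω) (z j ω) * K (z k ω) (z l ω) ∂ℙ = A * A := by
    intro i j k l hij hkl hik hil hjk hjl
    have hind : IndepFun (fun ω => K (z i ω) (z j ω)) (fun ω => K (z k ω) (z l ω)) ℙ :=
      IndepFun.comp (hindep.indepFun_prodMk_prodMk hmeas i j k l hik hil hjk hjl)
        hKmeas hKmeas
    have h := hind.integral_mul_eq_mul_integral (iKz i j).1 (iKz k l).1
    rw [hIA i j hij, hIA k l hkl] at h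
    simpa [Pi.mul_apply] using h
  -- iterated-integral form of A and transfer of hfun integrals
  have hAiter : ∫ x, hfun x ∂μ = A := (integral_prod _ hKprodInt).symm
  have hIh : ∫ ω, hfun (z i0 ω) ∂ℙ = A := by
    calc ∫ ω, hfun (z i0 ω) ∂ℙ = ∫ x, hfun x ∂μ := by
          rw [hμdef]
          exact (integral_map (hmeas i0).aemeasurable mh.aestronglyMeasurable).symm
      _ = A := hAiter
  have hIh2 : ∫ ω, (hfun (z i0 ω)) ^ 2 ∂ℙ = Cv := by
    calc ∫ ω, (hfun (z i0 ω)) ^ 2 ∂ℙ = ∫ x, (hfun x) ^ 2 ∂μ := by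
          rw [hμdef]
          exact (integral_map (hmeas i0).aemeasurable
            ((mh.measurable.pow_const 2).aestronglyMeasurable)).symm
      _ = Cv := by rw [hCv]
  -- MemLp helper
  have memL2 : ∀ (f : Ω → ℝ) (D : ℝ), Measurable f → (∀ ω, |f ω| ≤ D) → MemLp f 2 ℙ := by
    intro f D hf hb
    exact (memLp_top_of_bound hf.aestronglyMeasurable D
      (Filter.Eventually.of_forall fun ω => by simpa [Real.norm_eq_abs] using hb ω)).mono_exponent le_top
  -- variance of the two RHS terms
  have hVar1 : variance (fun ω => K (z i0 ω) (z i1 ω)) ℙ = B - A * A := by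
    rw [variance_eq_sub (memL2 _ C (mKz i0 i1) (fun ω => hC _ _))]
    simp only [Pi.pow_apply]
    rw [hIB i0 i1 h01, hIA i0 i1 h01]
    ring
  have hfeq : (fun ω => ∫ ω', K (z i0 ω) (z i1 ω') ∂ℙ) = fun ω => hfun (z i0 ω) := by
    funext ω
    calc ∫ ω', K (z i0 ω) (z i1 ω') ∂ℙ
        = ∫ y, K (z i0 ω) y ∂(Measure.map (z i1) ℙ) :=
          (integral_map (hmeas i1).aemeasurable
            ((hKmeas.comp (measurable_const.prodMk measurable_id)).aestronglyMeasurable)).symm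
      _ = hfun (z i0 ω) := by rw [hmap i1]
  have hVar2 : variance (fun ω => ∫ ω', K (z i0 ω) (z i1 ω') ∂ℙ) ℙ = Cv - A * A := by
    rw [hfeq, variance_eq_sub (memL2 (fun ω => hfun (z i0 ω)) C (mh.measurable.comp (hmeas i0)) (fun ω => bh _))]
    simp only [Pi.pow_apply]
    rw [hIh2, hIh]
    ring
  -- the statistic
  set T : Ω → ℝ := fun ω => ((m : ℝ) ^ 2)⁻¹ *
      ∑ i : Fin m, ∑ j : Fin m, if i = j then 0 else K (z i ω) (z j ω) with hT
  set F : Fin m → Fin m → Ω → ℝ :=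
    fun i j ω => if i = j then 0 else K (z i ω) (z j ω) with hF
  have mF : ∀ i j, Measurable (F i j) := by
    intro i j
    by_cases hij : i = j
    · simp only [hF, if_pos hij]; exact measurable_const
    · simp only [hF, if_neg hij]; exact mKz i j
  have bF : ∀ i j ω, |F i j ω| ≤ C := by
    intro i j ω
    by_cases hij : i = j
    · simp only [hF, if_pos hij, abs_zero]; exact hC0
    · simp only [hF, if_neg hij]; exact hC _ _
  have iF : ∀ i j, Integrable (F i j) ℙ := fun i j =>
    integrable_of_bdd (mF i j).aestronglyMeasurable (bF i j)
  have iFF : ∀ i j k l, Integrable (fun ω => F i j ω * F k l ω) ℙ := fun i j k l =>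
    integrable_of_bdd ((mF i j).mul (mF k l)).aestronglyMeasurable (C := C * C)
      fun ω => by rw [abs_mul]; exact mul_le_mul (bF i j ω) (bF k l ω) (abs_nonneg _) hC0
  have hTF : ∀ ω, T ω = ((m : ℝ) ^ 2)⁻¹ * ∑ p : Fin m × Fin m, F p.1 p.2 ω := by
    intro ω
    simp [hT, hF, Fintype.sum_prod_type]
  -- the matrix of second moments
  set e : Fin m → Fin m → Fin m → Fin m → ℝ := fun i j k l =>
    if i = j ∨ k = l then 0
    else if (k = i ∧ l = j) ∨ (k = j ∧ l = i) then B
    else if k = i ∨ k = j ∨ l = i ∨ l = j then Cv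
    else A * A with he
  have hFFe : ∀ i j k l, ∫ ω, F i j ω * F k l ω ∂ℙ = e i j k l := by
    intro i j k l
    by_cases hij : i = j
    · simp [hF, he, hij]
    by_cases hkl : k = l
    · simp [hF, he, hkl]
    have hint : (fun ω => F i j ω * F k l ω)
        = fun ω => K (z i ω) (z j ω) * K (z k ω) (z l ω) := by
      funext ω; simp [hF, hij, hkl]
    rw [hint]
    by_cases h1 : k = i ∧ l = j
    · obtain ⟨rfl, rfl⟩ := h1
      have hh : (fun ω => K (z k ω) (z l ω) * K (z k ω) (z l ω))
          = fun ω => (K (z k ω) (z l ω)) ^ 2 := by funext ω; ring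
      rw [hh, hIB k l hij]
      simp only [he]; split_ifs <;> first | rfl | tauto
    by_cases h2 : k = j ∧ l = i
    · obtain ⟨rfl, rfl⟩ := h2
      have hh : (fun ω => K (z l ω) (z k ω) * K (z k ω) (z l ω))
          = fun ω => (K (z l ω) (z k ω)) ^ 2 := by
        funext ω; rw [hKsymm (z k ω) (z l ω)]; ring
      rw [hh, hIB l k hij]
      simp only [he]; split_ifs <;> first | rfl | tauto
    by_cases hki : k = i
    · subst hki
      have hlj : l ≠ j := fun h => h1 ⟨rfl, h⟩
      rw [hIC k j l hij (fun h => hkl h) (fun h => hlj h.symm)]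
      simp only [he]; split_ifs <;> first | rfl | tauto
    by_cases hkj : k = j
    · subst hkj
      have hli : l ≠ i := fun h => h2 ⟨rfl, h⟩
      have hh : (fun ω => K (z i ω) (z k ω) * K (z k ω) (z l ω))
          = fun ω => K (z k ω) (z i ω) * K (z k ω) (z l ω) := by
        funext ω; rw [hKsymm (z i ω) (z k ω)]
      rw [hh, hIC k i l (Ne.symm hij) (fun h => hkl h) (fun h => hli h.symm)]
      simp only [he]; split_ifs <;> first | rfl | tauto
    by_cases hli : l = i
    · subst hli
      have hh : (fun ω => K (z l ω) (z j ω) * K (z k ω) (z l ω))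
          = fun ω => K (z l ω) (z j ω) * K (z l ω) (z k ω) := by
        funext ω; rw [hKsymm (z k ω) (z l ω)]
      rw [hh, hIC l j k hij (Ne.symm hki) (fun h => hkj h.symm)]
      simp only [he]; split_ifs <;> first | rfl | tauto
    by_cases hlj : l = j
    · subst hlj
      have hh : (fun ω => K (z i ω) (z l ω) * K (z k ω) (z l ω))
          = fun ω => K (z l ω) (z i ω) * K (z l ω) (z k ω) := by
        funext ω; rw [hKsymm (z i ω) (z l ω), hKsymm (z k ω) (z l ω)]
      rw [hh, hIC l i k (Ne.symm hij) (fun h => hkl h.symm) (fun h => hki h.symm)]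
      simp only [he]; split_ifs <;> first | rfl | tauto
    · rw [hIA4 i j k l hij hkl (Ne.symm hki) (Ne.symm hli) (Ne.symm hkj) (Ne.symm hlj)]
      simp only [he]; split_ifs <;> first | rfl | tauto
  have hIF : ∀ i j : Fin m, ∫ ω, F i j ω ∂ℙ = if i = j then (0:ℝ) else A := by
    intro i j
    by_cases hij : i = j
    · simp [hF, hij]
    · simp only [hF, if_neg hij]
      rw [hIA i j hij]
  -- diagonal-free constant sums
  have sum_offdiag : ∀ r : ℝ, (∑ i : Fin m, ∑ j : Fin m, if i = j then (0:ℝ) else r)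
      = (m : ℝ) * ((m : ℝ) * r - r) := by
    intro r
    have hrow : ∀ i : Fin m, (∑ j : Fin m, if i = j then (0:ℝ) else r)
        = (m : ℝ) * r - r := by
      intro i
      have h1 : ∀ j : Fin m, (if i = j then (0:ℝ) else r)
          = r - (if i = j then r else 0) := by
        intro j; split <;> ring
      rw [Finset.sum_congr rfl fun j _ => h1 j, Finset.sum_sub_distrib, Finset.sum_const,
        Finset.card_univ, Fintype.card_fin, nsmul_eq_mul]
      simp
    rw [Finset.sum_congr rfl fun i _ => hrow i, Finset.sum_const, Finset.card_univ,
      Fintype.card_fin, nsmul_eq_mul]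
  -- row sums of `e`
  set R := 2 * B + 4 * ((m : ℝ) - 2) * Cv + ((m : ℝ) - 2) * ((m : ℝ) - 3) * (A * A) with hR
  have hrowk : ∀ i j : Fin m, i ≠ j → ∀ k : Fin m, (∑ l : Fin m, e i j k l)
      = if k = i then B + ((m : ℝ) - 2) * Cv else if k = j then B + ((m : ℝ) - 2) * Cv
        else 2 * Cv + ((m : ℝ) - 3) * (A * A) := by
    intro i j hij k
    by_cases hki : k = i
    · subst hki
      have hval : ∀ l : Fin m, e k j k l = if l = k then 0 else if l = j then B else Cv := by
        intro l
        by_cases hlk : l = k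
        · simp only [he]; split_ifs <;> first | rfl | tauto
        by_cases hlj : l = j
        · simp only [he]; split_ifs <;> first | rfl | tauto
        · simp only [he]; split_ifs <;> first | rfl | tauto
      rw [Finset.sum_congr rfl fun l _ => hval l, sum_two_special k j hij 0 B Cv, if_pos rfl]
      ring
    by_cases hkj : k = j
    · subst hkj
      have hval : ∀ l : Fin m, e i k k l = if l = k then 0 else if l = i then B else Cv := by
        intro l
        by_cases hlk : l = k
        · simp only [he]; split_ifs <;> first | rfl | tauto
        by_cases hli : l = i
        · simp only [he]; split_ifs <;> first | rfl | tauto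
        · simp only [he]; split_ifs <;> first | rfl | tauto
      rw [Finset.sum_congr rfl fun l _ => hval l,
        sum_two_special k i (Ne.symm hij) 0 B Cv, if_neg (Ne.symm hij), if_pos rfl]
      ring
    · have hval : ∀ l : Fin m, e i j k l
          = if l = k then 0 else if l = i then Cv else if l = j then Cv else A * A := by
        intro l
        by_cases hlk : l = k
        · simp only [he]; split_ifs <;> first | rfl | tauto
        by_cases hli : l = i
        · simp only [he]; split_ifs <;> first | rfl | tauto
        by_cases hlj : l = j
        · simp only [he]; split_ifs <;> first | rfl | tauto
        · simp only [he]; split_ifs <;> first | rfl | tauto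
      rw [Finset.sum_congr rfl fun l _ => hval l,
        sum_three_special k i j hki hkj hij 0 Cv Cv (A * A), if_neg hki, if_neg hkj]
      ring
  have hEsum : (∑ p : Fin m × Fin m, ∑ q : Fin m × Fin m, e p.1 p.2 q.1 q.2)
      = (m : ℝ) * ((m : ℝ) * R - R) := by
    have hrow : ∀ i j : Fin m, (∑ q : Fin m × Fin m, e i j q.1 q.2)
        = if i = j then (0:ℝ) else R := by
      intro i j
      by_cases hij : i = j
      · simp [he, hij]
      · rw [if_neg hij, Fintype.sum_prod_type]
        rw [Finset.sum_congr rfl fun k _ => hrowk i j hij k,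
          sum_two_special i j hij _ _ _, hR]
        ring
    rw [Fintype.sum_prod_type]
    calc ∑ i : Fin m, ∑ j : Fin m, ∑ q : Fin m × Fin m, e i j q.1 q.2
        = ∑ i : Fin m, ∑ j : Fin m, (if i = j then (0:ℝ) else R) :=
          Finset.sum_congr rfl fun i _ => Finset.sum_congr rfl fun j _ => hrow i j
      _ = (m : ℝ) * ((m : ℝ) * R - R) := sum_offdiag R
  -- first and second moments of T
  have hIT : ∫ ω, T ω ∂ℙ = ((m : ℝ) ^ 2)⁻¹ * ((m : ℝ) * ((m : ℝ) * A - A)) := by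
    calc ∫ ω, T ω ∂ℙ
        = ∫ ω, ((m : ℝ) ^ 2)⁻¹ * ∑ p : Fin m × Fin m, F p.1 p.2 ω ∂ℙ := by
          simp only [hTF]
      _ = ((m : ℝ) ^ 2)⁻¹ * ∑ p : Fin m × Fin m, ∫ ω, F p.1 p.2 ω ∂ℙ := by
          rw [integral_const_mul, integral_finset_sum _ fun p _ => iF p.1 p.2]
      _ = ((m : ℝ) ^ 2)⁻¹ * ∑ p : Fin m × Fin m, (if p.1 = p.2 then (0:ℝ) else A) := by
          rw [Finset.sum_congr rfl fun p _ => hIF p.1 p.2]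
      _ = _ := by rw [Fintype.sum_prod_type, sum_offdiag A]
  have hT2fun : ∀ ω, T ω ^ 2 = (((m : ℝ) ^ 2)⁻¹) ^ 2 *
      ∑ p : Fin m × Fin m, ∑ q : Fin m × Fin m, F p.1 p.2 ω * F q.1 q.2 ω := by
    intro ω
    rw [hTF ω, mul_pow, pow_two (∑ p : Fin m × Fin m, F p.1 p.2 ω),
      Finset.sum_mul_sum]
  have hIT2 : ∫ ω, T ω ^ 2 ∂ℙ
      = (((m : ℝ) ^ 2)⁻¹) ^ 2 * ((m : ℝ) * ((m : ℝ) * R - R)) := by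
    calc ∫ ω, T ω ^ 2 ∂ℙ
        = ∫ ω, (((m : ℝ) ^ 2)⁻¹) ^ 2 * ∑ p : Fin m × Fin m, ∑ q : Fin m × Fin m,
            F p.1 p.2 ω * F q.1 q.2 ω ∂ℙ := by simp only [hT2fun]
      _ = (((m : ℝ) ^ 2)⁻¹) ^ 2 * ∑ p : Fin m × Fin m, ∑ q : Fin m × Fin m,
            ∫ ω, F p.1 p.2 ω * F q.1 q.2 ω ∂ℙ := by
          rw [integral_const_mul, integral_finset_sum _ fun p _ =>
            integrable_finset_sum _ fun q _ => iFF p.1 p.2 q.1 q.2]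
          exact congrArg _ (Finset.sum_congr rfl fun p _ =>
            integral_finset_sum _ fun q _ => iFF p.1 p.2 q.1 q.2)
      _ = (((m : ℝ) ^ 2)⁻¹) ^ 2 * ∑ p : Fin m × Fin m, ∑ q : Fin m × Fin m,
            e p.1 p.2 q.1 q.2 :=
          congrArg _ (Finset.sum_congr rfl fun p _ => Finset.sum_congr rfl
            fun q _ => hFFe p.1 p.2 q.1 q.2)
      _ = _ := by rw [hEsum]
  -- measurability and boundedness of T
  have hsummeas : ∀ i j : Fin m, Measurable fun ω =>
      if i = j then (0:ℝ) else K (z i ω) (z j ω) := by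
    intro i j
    by_cases hij : i = j
    · simp only [if_pos hij]; exact measurable_const
    · simp only [if_neg hij]; exact mKz i j
  have hTmeas : Measurable T := by
    rw [hT]
    exact (Finset.measurable_sum _ fun i _ =>
      Finset.measurable_sum _ fun j _ => hsummeas i j).const_mul _
  have hTb : ∀ ω, |T ω| ≤ ((m : ℝ) ^ 2)⁻¹ * ((m : ℝ) * ((m : ℝ) * C)) := by
    intro ω
    have h1 : |∑ i : Fin m, ∑ j : Fin m, if i = j then (0:ℝ) else K (z i ω) (z j ω)|
        ≤ (m : ℝ) * ((m : ℝ) * C) := by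
      calc |∑ i : Fin m, ∑ j : Fin m, if i = j then (0:ℝ) else K (z i ω) (z j ω)|
          ≤ ∑ i : Fin m, |∑ j : Fin m, if i = j then (0:ℝ) else K (z i ω) (z j ω)| :=
            Finset.abs_sum_le_sum_abs _ _
        _ ≤ ∑ i : Fin m, ∑ j : Fin m, |if i = j then (0:ℝ) else K (z i ω) (z j ω)| :=
            Finset.sum_le_sum fun i _ => Finset.abs_sum_le_sum_abs _ _
        _ ≤ ∑ _i : Fin m, ∑ _j : Fin m, C := by
            refine Finset.sum_le_sum fun i _ => Finset.sum_le_sum fun j _ => ?_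
            by_cases hij : i = j
            · simp [hij, hC0]
            · simp only [if_neg hij]; exact hC _ _
        _ = (m : ℝ) * ((m : ℝ) * C) := by
            simp [Finset.sum_const, Finset.card_univ, nsmul_eq_mul]
    have h2 : T ω = ((m : ℝ) ^ 2)⁻¹ * ∑ i : Fin m, ∑ j : Fin m,
        (if i = j then (0:ℝ) else K (z i ω) (z j ω)) := by simp only [hT]
    rw [h2, abs_mul, abs_of_nonneg (by positivity : (0:ℝ) ≤ ((m : ℝ) ^ 2)⁻¹)]
    exact mul_le_mul_of_nonneg_left h1 (by positivity)
  have hmemT : MemLp T 2 ℙ := memL2 T _ hTmeas hTb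
  -- put everything together
  have hV1 : variance (fun ω => K (z (⟨0, by omega⟩ : Fin m) ω)
      (z (⟨1, by omega⟩ : Fin m) ω)) ℙ = B - A * A := hVar1
  have hV2 : variance (fun ω => ∫ ω', K (z (⟨0, by omega⟩ : Fin m) ω)
      (z (⟨1, by omega⟩ : Fin m) ω') ∂ℙ) ℙ = Cv - A * A := hVar2
  rw [variance_eq_sub hmemT, hV1, hV2]
  simp only [Pi.pow_apply]
  rw [hIT2, hIT, hR]
  have hM : (2 : ℝ) ≤ (m : ℝ) := by exact_mod_cast hm
  have hM0 : (m : ℝ) ≠ 0 := by linarith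
  field_simp
  ring
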